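/- Let 0<α<2, c>0, s(y)=c·|y|^{-(1+α)} for y≠0, and let H:ℝ→ℝ be a Schwartz function. Then there is a constant C>0 such that for all integers n≥1 and all x∈ℤ, the family y ↦ s(y/n^{1/α})·|Δ^n_{x,y}H| over y∈ℤ∖{0} is summable and (1/(2·n^{1/α}))·∑_{y∈ℤ∖{0}} s(y/n^{1/α})·|Δ^n_{x,y}H| ≤ C, uniformly in n and x. -/

import Mathlib

set_option maxHeartbeats 1000000

open MeasureTheory Filter Real

/-- The long-range jump kernel `s y = c * |y| ^ (-(1+α))` (equal to `0` at `y = 0`). -/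
noncomputable def sker (α c : ℝ) (y : ℝ) : ℝ := c * |y| ^ (-(1 + α))

/-- The discrete second difference
`Δ^n_{x,y}H = H((x+y)/n^{1/α}) + H((x−y)/n^{1/α}) − 2·H(x/n^{1/α})`. -/
noncomputable def discLap (α : ℝ) (H : ℝ → ℝ) (n : ℕ) (x y : ℤ) : ℝ :=
  H (((x + y : ℤ) : ℝ) / (n : ℝ) ^ (1 / α)) +
    H (((x - y : ℤ) : ℝ) / (n : ℝ) ^ (1 / α)) -
    2 * H ((x : ℝ) / (n : ℝ) ^ (1 / α))

/-- Telescoping sum. -/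
lemma tele_hasSum (g : ℕ → ℝ) (h0 : ∀ k, 0 ≤ g k) (hd : ∀ k, g (k+1) ≤ g k)
    (hlim : Tendsto g atTop (nhds 0)) :
    HasSum (fun k => g k - g (k+1)) (g 0) := by
  have hps : ∀ n, ∑ i ∈ Finset.range n, (g i - g (i+1)) = g 0 - g n := by
    intro n; exact Finset.sum_range_sub' g n
  have hsum : Summable (fun k => g k - g (k+1)) := by
    apply summable_of_sum_range_le (c := g 0) (fun k => by linarith [hd k])
    intro n; rw [hps n]; linarith [h0 n]
  rw [hsum.hasSum_iff_tendsto_nat]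
  simp_rw [hps]
  have := (tendsto_const_nhds (x := g 0) (f := atTop)).sub hlim
  simpa using this

/-- Bernoulli-type: `(1+q/u) * ((u-1)/u)^q ≤ 1` leading to the tail telescoping bound. -/
lemma key2 (q : ℝ) (hq : 0 < q) (t : ℝ) (ht : 1 ≤ t) :
    q * (t+1) ^ (-(1+q)) ≤ t ^ (-q) - (t+1) ^ (-q) := by
  have ht0 : 0 < t := by linarith
  have hu : 0 < t + 1 := by linarith
  -- key : ((t+1)/t)^q ≥ 1 + q/(t+1)
  have hlog : 1 / (t+1) ≤ Real.log ((t+1)/t) := by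
    have h1 : Real.log (t/(t+1)) ≤ t/(t+1) - 1 := Real.log_le_sub_one_of_pos (by positivity)
    have h2 : Real.log ((t+1)/t) = - Real.log (t/(t+1)) := by
      rw [← Real.log_inv]; congr 1; field_simp
    have h3 : t/(t+1) - 1 = -(1/(t+1)) := by field_simp; ring
    rw [h2]; linarith
  have hkey : 1 + q/(t+1) ≤ ((t+1)/t) ^ q := by
    have h1 : ((t+1)/t : ℝ) ^ q = Real.exp (q * Real.log ((t+1)/t)) := by
      rw [Real.rpow_def_of_pos (by positivity)]; ring_nf
    have h2 : q * (1/(t+1)) ≤ q * Real.log ((t+1)/t) :=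
      mul_le_mul_of_nonneg_left hlog hq.le
    have h3 : 1 + q * (1/(t+1)) ≤ Real.exp (q * (1/(t+1))) := by
      have := Real.add_one_le_exp (q * (1/(t+1))); linarith
    have h4 : Real.exp (q * (1/(t+1))) ≤ Real.exp (q * Real.log ((t+1)/t)) :=
      Real.exp_le_exp.2 h2
    rw [h1]
    calc 1 + q/(t+1) = 1 + q * (1/(t+1)) := by ring
    _ ≤ Real.exp (q * (1/(t+1))) := h3
    _ ≤ _ := h4
  -- multiply through by (t+1)^(-q)
  have hrw : ((t+1)/t : ℝ) ^ q = (t+1)^q / t^q := Real.div_rpow hu.le ht0.le q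
  have htq : (0:ℝ) < t ^ q := Real.rpow_pos_of_pos ht0 q
  have huq : (0:ℝ) < (t+1) ^ q := Real.rpow_pos_of_pos hu q
  have hu1q : (0:ℝ) < (t+1) ^ (1+q) := Real.rpow_pos_of_pos hu (1+q)
  have e1 : (t:ℝ) ^ (-q) = (t^q)⁻¹ := Real.rpow_neg ht0.le q
  have e2 : ((t+1):ℝ) ^ (-q) = ((t+1)^q)⁻¹ := Real.rpow_neg hu.le q
  have e3 : ((t+1):ℝ) ^ (-(1+q)) = ((t+1)^(1+q))⁻¹ := Real.rpow_neg hu.le (1+q)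
  have e4 : ((t+1):ℝ) ^ (1+q) = (t+1) * (t+1)^q := by
    rw [Real.rpow_add hu, Real.rpow_one]
  rw [e1, e2, e3, e4]
  rw [hrw] at hkey
  rw [← sub_nonneg]
  have expand : (t ^ q)⁻¹ - ((t + 1) ^ q)⁻¹ - q * ((t + 1) * (t + 1) ^ q)⁻¹
      = (((t+1)^q/t^q) - (1 + q/(t+1))) / ((t+1)^q / (t+1) * (t+1)) := by
    field_simp
    ring
  rw [expand]
  have hnum : 0 ≤ ((t+1)^q/t^q) - (1 + q/(t+1)) := by linarith
  positivity

/-- Near-field telescoping bound: `min 1 p * (k+1)^(p-1) ≤ (k+1)^p - k^p` for `0 < p ≤ 2`. -/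
lemma key1 (p : ℝ) (hp : 0 < p) (k : ℕ) :
    min 1 p * ((k:ℝ)+1) ^ (p-1) ≤ ((k:ℝ)+1) ^ p - (k:ℝ) ^ p := by
  rcases Nat.eq_zero_or_pos k with hk | hk
  · subst hk
    simp only [Nat.cast_zero, zero_add]
    rw [Real.one_rpow, Real.one_rpow, Real.zero_rpow hp.ne']
    have : min 1 p ≤ 1 := min_le_left _ _
    linarith
  · have hk1 : (1:ℝ) ≤ (k:ℝ) := by exact_mod_cast hk
    have ht0 : (0:ℝ) < k := by linarith
    have hu : (0:ℝ) < (k:ℝ) + 1 := by linarith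
    have hrat0 : (0:ℝ) < (k:ℝ)/((k:ℝ)+1) := by positivity
    have hrat1 : (k:ℝ)/((k:ℝ)+1) ≤ 1 := by
      rw [div_le_one hu]; linarith
    -- main inequality: ((k)/(k+1))^p ≤ 1 - min 1 p / (k+1)
    have hmain : ((k:ℝ)/((k:ℝ)+1)) ^ p ≤ 1 - min 1 p / ((k:ℝ)+1) := by
      rcases le_total p 1 with hp1 | hp1
      · -- p ≤ 1 : AM-GM,  a^p * 1^(1-p) ≤ p a + (1-p)
        have := Real.geom_mean_le_arith_mean2_weighted hp.le (by linarith : (0:ℝ) ≤ 1 - p)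
          hrat0.le (zero_le_one) (by ring)
        rw [Real.one_rpow, mul_one] at this
        have hmin : min 1 p = p := min_eq_right hp1
        rw [hmin]
        have : ((k:ℝ)/((k:ℝ)+1)) ^ p ≤ p * ((k:ℝ)/((k:ℝ)+1)) + (1 - p) * 1 := this
        have heq : p * ((k:ℝ)/((k:ℝ)+1)) + (1 - p) * 1 = 1 - p / ((k:ℝ)+1) := by
          field_simp; ring
        linarith [heq ▸ this]
      · -- 1 ≤ p : a^p ≤ a
        have h1 : ((k:ℝ)/((k:ℝ)+1)) ^ p ≤ ((k:ℝ)/((k:ℝ)+1)) ^ (1:ℝ) :=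
          Real.rpow_le_rpow_of_exponent_ge hrat0 hrat1 hp1
        rw [Real.rpow_one] at h1
        have hmin : min 1 p = 1 := min_eq_left hp1
        rw [hmin]
        have : (k:ℝ)/((k:ℝ)+1) = 1 - 1/((k:ℝ)+1) := by field_simp; ring
        linarith
    -- multiply by (k+1)^p
    have hup : (0:ℝ) < ((k:ℝ)+1) ^ p := Real.rpow_pos_of_pos hu p
    have hdiv : ((k:ℝ)/((k:ℝ)+1)) ^ p = (k:ℝ)^p / ((k:ℝ)+1)^p := Real.div_rpow ht0.le hu.le p
    have hsplit : ((k:ℝ)+1) ^ (p-1) = ((k:ℝ)+1)^p / ((k:ℝ)+1) := by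
      rw [Real.rpow_sub hu p 1, Real.rpow_one]
    rw [hsplit]
    rw [hdiv] at hmain
    have := mul_le_mul_of_nonneg_left hmain hup.le
    have hne : ((k:ℝ)+1) ≠ 0 := hu.ne'
    have hne2 : ((k:ℝ)+1)^p ≠ 0 := hup.ne'
    calc min 1 p * (((k:ℝ)+1)^p / ((k:ℝ)+1))
        = ((k:ℝ)+1)^p - ((k:ℝ)+1)^p * (1 - min 1 p / ((k:ℝ)+1)) := by field_simp; ring
      _ ≤ ((k:ℝ)+1)^p - ((k:ℝ)+1)^p * ((k:ℝ)^p / ((k:ℝ)+1)^p) := by nlinarith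
      _ = ((k:ℝ)+1)^p - (k:ℝ)^p := by field_simp

/-- Second difference bound via two applications of the mean value theorem. -/
lemma second_diff (f : ℝ → ℝ) (hf : Differentiable ℝ f) (hf' : Differentiable ℝ (deriv f))
    (C2 : ℝ) (hC : ∀ t, |deriv (deriv f) t| ≤ C2) (a h : ℝ) :
    |f (a+h) + f (a-h) - 2*f a| ≤ C2 * h^2 := by
  have hC0 : 0 ≤ C2 := le_trans (abs_nonneg _) (hC 0)
  -- MVT for deriv f
  have mvt1 : ∀ u v : ℝ, |deriv f u - deriv f v| ≤ C2 * |u - v| := by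
    intro u v
    have := Convex.norm_image_sub_le_of_norm_hasDerivWithin_le
      (f := deriv f) (f' := deriv (deriv f)) (s := Set.univ) (C := C2)
      (fun x _ => (hf' x).hasDerivAt.hasDerivWithinAt)
      (fun x _ => by simpa [Real.norm_eq_abs] using hC x)
      convex_univ (Set.mem_univ v) (Set.mem_univ u)
    simpa [Real.norm_eq_abs] using this
  -- φ t = f (a+t) - f (a+t-h)
  set φ : ℝ → ℝ := fun t => f (a+t) - f (a+t-h) with hφ
  have hφd : ∀ t : ℝ, HasDerivAt φ (deriv f (a+t) - deriv f (a+t-h)) t := by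
    intro t
    have h1 : HasDerivAt (fun t : ℝ => f (a+t)) (deriv f (a+t)) t := by
      have := ((hf (a+t)).hasDerivAt.comp t ((hasDerivAt_id t).const_add a))
      simpa [Function.comp_def] using this
    have h2 : HasDerivAt (fun t : ℝ => f (a+t-h)) (deriv f (a+t-h)) t := by
      have := ((hf (a+t-h)).hasDerivAt.comp t (((hasDerivAt_id t).const_add a).sub_const h))
      simpa [Function.comp_def] using this
    exact h1.sub h2
  have mvt2 : |φ h - φ 0| ≤ (C2 * |h|) * |h - 0| := by
    have := Convex.norm_image_sub_le_of_norm_hasDerivWithin_le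
      (f := φ) (f' := fun t => deriv f (a+t) - deriv f (a+t-h)) (s := Set.univ) (C := C2 * |h|)
      (fun x _ => (hφd x).hasDerivWithinAt)
      (fun x _ => by
        have := mvt1 (a+x) (a+x-h)
        simpa [Real.norm_eq_abs] using this.trans_eq (by congr 1; ring_nf))
      convex_univ (Set.mem_univ 0) (Set.mem_univ h)
    simpa [Real.norm_eq_abs] using this
  have heq : φ h - φ 0 = f (a+h) + f (a-h) - 2*f a := by
    simp only [hφ]
    ring_nf
  rw [← heq]
  calc |φ h - φ 0| ≤ (C2 * |h|) * |h - 0| := mvt2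
    _ = C2 * h^2 := by rw [sub_zero, mul_assoc, ← abs_mul, ← sq, abs_sq]

/-- Near-field sum bound. -/
lemma sumA (α N : ℝ) (hα0 : 0 < α) (hα2 : α < 2) (hN : 1 ≤ N) :
    Summable (fun k : ℕ => if ((k:ℝ)+1) ≤ N then ((k:ℝ)+1)^(1-α) else 0) ∧
    ∑' k : ℕ, (if ((k:ℝ)+1) ≤ N then ((k:ℝ)+1)^(1-α) else 0)
      ≤ (4 / min 1 (2-α)) * N^(2-α) := by
  set p : ℝ := 2 - α with hp
  have hp0 : 0 < p := by simp [hp]; linarith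
  set m : ℝ := min 1 p with hm
  have hm0 : 0 < m := lt_min one_pos hp0
  set A : ℕ → ℝ := fun k => if ((k:ℝ)+1) ≤ N then ((k:ℝ)+1)^(1-α) else 0 with hA
  set M : ℕ := ⌈N⌉₊ with hM
  have hsupp : ∀ k ∉ Finset.range M, A k = 0 := by
    intro k hk
    simp only [Finset.mem_range, not_lt] at hk
    have h1 : N ≤ (M:ℝ) := Nat.le_ceil N
    have h2 : (M:ℝ) ≤ (k:ℝ) := by exact_mod_cast hk
    simp only [hA, if_neg (by push_neg; linarith : ¬ ((k:ℝ)+1) ≤ N)]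
  refine ⟨summable_of_ne_finset_zero hsupp, ?_⟩
  rw [tsum_eq_sum hsupp]
  have hterm : ∀ k ∈ Finset.range M, A k ≤ (1/m) * (((k:ℝ)+1)^p - (k:ℝ)^p) := by
    intro k _
    have hkey := key1 p hp0 k
    have hdiff0 : 0 ≤ ((k:ℝ)+1)^p - (k:ℝ)^p := by
      have := Real.rpow_le_rpow (by positivity : (0:ℝ) ≤ (k:ℝ)) (by linarith : (k:ℝ) ≤ (k:ℝ)+1) hp0.le
      linarith
    by_cases hc : ((k:ℝ)+1) ≤ N
    · simp only [hA, if_pos hc]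
      have hexp : p - 1 = 1 - α := by simp [hp]; ring
      rw [← hexp]
      rw [div_mul_eq_mul_div, le_div_iff₀ hm0, one_mul]
      calc ((k:ℝ)+1)^(p-1) * m = m * ((k:ℝ)+1)^(p-1) := by ring
        _ ≤ _ := hkey
    · simp only [hA, if_neg hc]
      positivity
  calc ∑ k ∈ Finset.range M, A k ≤ ∑ k ∈ Finset.range M, (1/m) * (((k:ℝ)+1)^p - (k:ℝ)^p) :=
        Finset.sum_le_sum hterm
    _ = (1/m) * ((M:ℝ)^p - (0:ℝ)^p) := by
        rw [← Finset.mul_sum]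
        congr 1
        have := Finset.sum_range_sub (f := fun k : ℕ => ((k:ℝ))^p) M
        simpa using this
    _ ≤ (4/m) * N^p := by
        rw [Real.zero_rpow hp0.ne', sub_zero]
        have hMN : (M:ℝ) ≤ 2 * N := by
          have := Nat.ceil_lt_add_one (by linarith : (0:ℝ) ≤ N)
          have : (M:ℝ) < N + 1 := this
          linarith
        have h1 : (M:ℝ)^p ≤ (2*N)^p :=
          Real.rpow_le_rpow (by positivity) hMN hp0.le
        have h2 : (2*N:ℝ)^p = 2^p * N^p := Real.mul_rpow (by norm_num) (by linarith)
        have h3 : (2:ℝ)^p ≤ 4 := by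
          have h4 : (2:ℝ)^p ≤ 2^(2:ℝ) :=
            Real.rpow_le_rpow_of_exponent_le (by norm_num) (by simp [hp]; linarith)
          have h5 : (2:ℝ)^(2:ℝ) = 4 := by
            rw [show (2:ℝ) = ((2:ℕ):ℝ) by norm_num, Real.rpow_natCast]; norm_num
          linarith
        have hNp : (0:ℝ) < N^p := Real.rpow_pos_of_pos (by linarith) p
        calc (1/m) * (M:ℝ)^p ≤ (1/m) * (4 * N^p) := by
              apply mul_le_mul_of_nonneg_left _ (by positivity)
              calc (M:ℝ)^p ≤ 2^p * N^p := h2 ▸ h1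
                _ ≤ 4 * N^p := by nlinarith
          _ = (4/m) * N^p := by ring

/-- Tail sum bound. -/
lemma sumB (α N : ℝ) (hα0 : 0 < α) (hα2 : α < 2) (hN : 1 ≤ N) :
    Summable (fun k : ℕ => if N < (k:ℝ)+1 then ((k:ℝ)+1)^(-(1+α)) else 0) ∧
    ∑' k : ℕ, (if N < (k:ℝ)+1 then ((k:ℝ)+1)^(-(1+α)) else 0) ≤ (4/α) * N^(-α) := by
  set B : ℕ → ℝ := fun k => if N < (k:ℝ)+1 then ((k:ℝ)+1)^(-(1+α)) else 0 with hB
  have hBnn : ∀ k, 0 ≤ B k := by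
    intro k; simp only [hB]; split <;> positivity
  have hBle : ∀ k, B k ≤ ((k:ℝ)+1)^(-(1+α)) := by
    intro k; simp only [hB]; split
    · exact le_rfl
    · positivity
  have hmaj : Summable (fun k : ℕ => ((k:ℝ)+1)^(-(1+α))) := by
    have h1 : Summable (fun n : ℕ => (n:ℝ)^(-(1+α))) :=
      Real.summable_nat_rpow.mpr (by linarith)
    have := (summable_nat_add_iff 1).mpr h1
    simpa using this
  have hBsum : Summable B := Summable.of_nonneg_of_le hBnn hBle hmaj
  refine ⟨hBsum, ?_⟩
  set m : ℕ := ⌈N/2⌉₊ with hm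
  have hmN : N/2 ≤ (m:ℝ) := Nat.le_ceil _
  have hm1 : 1 ≤ m := by
    rw [hm]
    exact Nat.one_le_iff_ne_zero.mpr (by positivity)
  -- support of B is in [m, ∞)
  have hsupp : ∀ i ∈ Finset.range m, B i = 0 := by
    intro i hi
    simp only [Finset.mem_range] at hi
    simp only [hB]
    rw [if_neg]
    push_neg
    -- need (i:ℝ)+1 ≤ N, given i < m
    by_contra hcon
    push_neg at hcon
    -- hcon : N < i+1, so i ≥ 1 and i > N - 1, hence i ≥ N/2, so m ≤ i
    have hi1 : 1 ≤ i := by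
      by_contra h0
      push_neg at h0
      interval_cases i
      simp at hcon
      linarith
    have hiR : (1:ℝ) ≤ (i:ℝ) := by exact_mod_cast hi1
    have hge : N/2 ≤ (i:ℝ) := by
      rcases le_total N 2 with h | h
      · linarith
      · linarith
    have : m ≤ i := Nat.ceil_le.mpr hge
    omega
  have hsplit := (Summable.sum_add_tsum_nat_add m hBsum).symm
  have hzero : ∑ i ∈ Finset.range m, B i = 0 := Finset.sum_eq_zero hsupp
  -- telescoping majorant
  set g : ℕ → ℝ := fun k => ((k+m : ℕ):ℝ)^(-α) with hg
  have hg0 : ∀ k, 0 ≤ g k := fun k => by positivity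
  have hgpos : ∀ k, (1:ℝ) ≤ ((k+m:ℕ):ℝ) := by
    intro k
    have h : (1:ℕ) ≤ k + m := by omega
    exact_mod_cast h
  have hgd : ∀ k, g (k+1) ≤ g k := by
    intro k
    apply Real.rpow_le_rpow_of_nonpos
    · have := hgpos k; linarith
    · push_cast; linarith
    · linarith
  have hglim : Tendsto g atTop (nhds 0) := by
    apply (tendsto_rpow_neg_atTop hα0).comp
    apply tendsto_atTop_mono (fun k => ?_) tendsto_natCast_atTop_atTop
    push_cast; linarith
  have htele : HasSum (fun k => g k - g (k+1)) (g 0) := tele_hasSum g hg0 hgd hglim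
  have hStele : HasSum (fun k => (1/α) * (g k - g (k+1))) ((1/α) * g 0) := htele.mul_left _
  have hterm : ∀ k : ℕ, B (k+m) ≤ (1/α) * (g k - g (k+1)) := by
    intro k
    simp only [hB]
    split
    · have ht : (1:ℝ) ≤ ((k+m:ℕ):ℝ) := hgpos k
      have hkey := key2 α hα0 ((k+m:ℕ):ℝ) ht
      have e1 : g k = ((k+m:ℕ):ℝ)^(-α) := rfl
      have e2 : g (k+1) = (((k+m:ℕ):ℝ)+1)^(-α) := by
        simp only [hg]; norm_num; ring_nf
      have e3 : (((k+m:ℕ):ℝ)+1)^(-(1+α)) ≤ (1/α) * (g k - g (k+1)) := by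
        rw [← e1, ← e2] at hkey
        calc (((k+m:ℕ):ℝ)+1)^(-(1+α)) = (1/α) * (α * (((k+m:ℕ):ℝ)+1)^(-(1+α))) := by
              field_simp
          _ ≤ (1/α) * (g k - g (k+1)) := mul_le_mul_of_nonneg_left hkey (by positivity)
      calc (↑(k+m)+1 : ℝ)^(-(1+α)) = (((k+m:ℕ):ℝ)+1)^(-(1+α)) := by norm_num
        _ ≤ (1/α) * (g k - g (k+1)) := e3
    · have := hgd k
      have : 0 ≤ g k - g (k+1) := by linarith
      positivity
  have hshift_sum : Summable (fun k => B (k+m)) := by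
    have := (summable_nat_add_iff m).mpr hBsum
    exact this
  have hfinal : ∑' k, B (k+m) ≤ (1/α) * g 0 := by
    exact Summable.tsum_le_tsum hterm hshift_sum hStele.summable |>.trans hStele.tsum_eq.le
  have hg0val : (1/α) * g 0 ≤ (4/α) * N^(-α) := by
    have hN2 : (0:ℝ) < N/2 := by linarith
    have h1 : g 0 = (m:ℝ)^(-α) := by simp [hg]
    have h2 : (m:ℝ)^(-α) ≤ (N/2)^(-α) :=
      Real.rpow_le_rpow_of_nonpos hN2 hmN (by linarith)
    have h3 : (N/2:ℝ)^(-α) = N^(-α) / 2^(-α) := Real.div_rpow (by linarith) (by norm_num) _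
    have h4 : (2:ℝ)^(-α) = ((2:ℝ)^α)⁻¹ := Real.rpow_neg (by norm_num) α
    have h5 : (2:ℝ)^α ≤ 4 := by
      have h6 : (2:ℝ)^α ≤ 2^(2:ℝ) :=
        Real.rpow_le_rpow_of_exponent_le (by norm_num) (by linarith)
      have h7 : (2:ℝ)^(2:ℝ) = 4 := by
        rw [show (2:ℝ) = ((2:ℕ):ℝ) by norm_num, Real.rpow_natCast]; norm_num
      linarith
    have h2pos : (0:ℝ) < (2:ℝ)^α := Real.rpow_pos_of_pos (by norm_num) α
    have hNα : (0:ℝ) < N^(-α) := Real.rpow_pos_of_pos (by linarith) _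
    have h8 : (N/2:ℝ)^(-α) = 2^α * N^(-α) := by
      rw [h3, h4]; field_simp
    have h9 : g 0 ≤ 2^α * N^(-α) := by rw [h1]; rw [h8] at h2; exact h2
    have hαinv : (0:ℝ) < 1/α := by positivity
    calc (1/α) * g 0 ≤ (1/α) * (2^α * N^(-α)) := mul_le_mul_of_nonneg_left h9 hαinv.le
      _ ≤ (1/α) * (4 * N^(-α)) := by
          apply mul_le_mul_of_nonneg_left _ hαinv.le
          nlinarith
      _ = (4/α) * N^(-α) := by ring
  have : tsum B = ∑' k, B (k+m) := by rw [hsplit, hzero, zero_add]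
  rw [this]
  exact hfinal.trans hg0val

/-- For `0 < α < 2`, `c > 0` and Schwartz `H`, there is `C > 0` such
that for all `n ≥ 1` and `x ∈ ℤ`, the family `y ↦ s(y/n^{1/α})·|Δ^n_{x,y}H|`
over `y ∈ ℤ ∖ {0}` is summable and
`(1/(2 n^{1/α})) ∑_{y ≠ 0} s(y/n^{1/α}) |Δ^n_{x,y}H| ≤ C`, uniformly in `n, x`. -/
theorem discrete_generator_uniform_bound
    (α c : ℝ) (hα0 : 0 < α) (hα2 : α < 2) (hc : 0 < c)
    (H : SchwartzMap ℝ ℝ) :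
    ∃ C : ℝ, 0 < C ∧ ∀ n : ℕ, 1 ≤ n → ∀ x : ℤ,
      Summable (fun y : {y : ℤ // y ≠ 0} =>
        sker α c (((y : ℤ) : ℝ) / (n : ℝ) ^ (1 / α)) * |discLap α (⇑H) n x y|) ∧
      (1 / (2 * (n : ℝ) ^ (1 / α))) *
        (∑' y : {y : ℤ // y ≠ 0},
          sker α c (((y : ℤ) : ℝ) / (n : ℝ) ^ (1 / α)) * |discLap α (⇑H) n x y|)
        ≤ C := by
  classical
  -- sup norm bounds
  obtain ⟨C0, hC0pos, hC0⟩ := H.decay 0 0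
  have hC0' : ∀ t : ℝ, |H t| ≤ C0 := by
    intro t
    have := hC0 t
    simpa [norm_iteratedFDeriv_zero, Real.norm_eq_abs] using this
  set H1 := SchwartzMap.derivCLM ℝ ℝ H with hH1
  set H2 := SchwartzMap.derivCLM ℝ ℝ H1 with hH2
  obtain ⟨C2, hC2pos, hC2⟩ := H2.decay 0 0
  have hderiv1 : deriv (⇑H) = ⇑H1 := by
    funext t; exact (SchwartzMap.derivCLM_apply ℝ H t).symm
  have hderiv2 : deriv (deriv (⇑H)) = ⇑H2 := by
    rw [hderiv1]; funext t; exact (SchwartzMap.derivCLM_apply ℝ H1 t).symm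
  have hC2' : ∀ t : ℝ, |deriv (deriv (⇑H)) t| ≤ C2 := by
    intro t
    rw [hderiv2]
    have := hC2 t
    simpa [norm_iteratedFDeriv_zero, Real.norm_eq_abs] using this
  have hdiff : Differentiable ℝ (⇑H) := H.differentiable
  have hdiff' : Differentiable ℝ (deriv (⇑H)) := by rw [hderiv1]; exact H1.differentiable
  have hC0nn : 0 ≤ C0 := hC0pos.le
  have hC2nn : 0 ≤ C2 := hC2pos.le
  -- constants
  set mA : ℝ := min 1 (2 - α) with hmA
  have hmA0 : 0 < mA := lt_min one_pos (by linarith)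
  set D : ℝ := 4*C2/mA + 16*C0/α with hD
  have hDpos : 0 < D := by positivity
  refine ⟨c * D + 1, by positivity, ?_⟩
  intro n hn x
  set N : ℝ := (n : ℝ) ^ (1 / α) with hNdef
  have hn1 : (1:ℝ) ≤ (n:ℝ) := by exact_mod_cast hn
  have hN1 : 1 ≤ N := by
    rw [hNdef]
    calc (1:ℝ) = 1 ^ (1/α) := (Real.one_rpow _).symm
      _ ≤ (n:ℝ) ^ (1/α) := Real.rpow_le_rpow (by norm_num) hn1 (by positivity)
  have hN0 : 0 < N := by linarith
  -- kernel rewriting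
  have hsker : ∀ y : ℤ, sker α c ((y:ℝ)/N) = c * (|(y:ℝ)|^(-(1+α)) * N^(1+α)) := by
    intro y
    unfold sker
    rw [abs_div, abs_of_pos hN0, Real.div_rpow (abs_nonneg _) hN0.le,
      Real.rpow_neg hN0.le (1+α), div_eq_mul_inv, inv_inv]
  -- second difference bounds
  have hΔrw : ∀ y : ℤ, discLap α (⇑H) n x y
      = ⇑H ((x:ℝ)/N + (y:ℝ)/N) + ⇑H ((x:ℝ)/N - (y:ℝ)/N) - 2 * ⇑H ((x:ℝ)/N) := by
    intro y
    unfold discLap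
    rw [← hNdef]
    push_cast
    rw [add_div, sub_div]
  have hΔ2 : ∀ y : ℤ, |discLap α (⇑H) n x y| ≤ C2 * ((y:ℝ)/N)^2 := by
    intro y
    rw [hΔrw y]
    exact second_diff (⇑H) hdiff hdiff' C2 hC2' ((x:ℝ)/N) ((y:ℝ)/N)
  have hΔ4 : ∀ y : ℤ, |discLap α (⇑H) n x y| ≤ 4 * C0 := by
    intro y
    rw [hΔrw y]
    have h1 := hC0' ((x:ℝ)/N + (y:ℝ)/N)
    have h2 := hC0' ((x:ℝ)/N - (y:ℝ)/N)
    have h3 := hC0' ((x:ℝ)/N)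
    have := abs_sub (⇑H ((x:ℝ)/N + (y:ℝ)/N) + ⇑H ((x:ℝ)/N - (y:ℝ)/N)) (2 * ⇑H ((x:ℝ)/N))
    have habs : |⇑H ((x:ℝ)/N + (y:ℝ)/N) + ⇑H ((x:ℝ)/N - (y:ℝ)/N)|
        ≤ |⇑H ((x:ℝ)/N + (y:ℝ)/N)| + |⇑H ((x:ℝ)/N - (y:ℝ)/N)| := abs_add_le _ _
    have h2abs : |2 * ⇑H ((x:ℝ)/N)| = 2 * |⇑H ((x:ℝ)/N)| := by
      rw [abs_mul]; norm_num
    calc |_ - _| ≤ _ + _ := abs_sub _ _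
      _ ≤ 4 * C0 := by rw [h2abs] at *; linarith
  -- the majorant on ℤ
  set Mz : ℤ → ℝ := fun y => if y = 0 then 0 else
      c * N^(1+α) * (if |(y:ℝ)| ≤ N then C2 * |(y:ℝ)|^(1-α) / N^2
        else 4*C0 * |(y:ℝ)|^(-(1+α))) with hMz
  have hMznn : ∀ y : ℤ, 0 ≤ Mz y := by
    intro y
    simp only [hMz]
    split
    · exact le_rfl
    · split <;> positivity
  have hFnn : ∀ y : {y : ℤ // y ≠ 0},
      0 ≤ sker α c (((y:ℤ):ℝ)/N) * |discLap α (⇑H) n x y| := by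
    intro y
    apply mul_nonneg _ (abs_nonneg _)
    rw [hsker]
    positivity
  have hFle : ∀ y : {y : ℤ // y ≠ 0},
      sker α c (((y:ℤ):ℝ)/N) * |discLap α (⇑H) n x y| ≤ Mz y := by
    rintro ⟨y, hy⟩
    simp only [hMz, if_neg hy]
    rw [hsker]
    have hyR : ((y:ℝ)) ≠ 0 := by exact_mod_cast hy
    have hyabs : 0 < |(y:ℝ)| := abs_pos.mpr hyR
    by_cases hcase : |(y:ℝ)| ≤ N
    · rw [if_pos hcase]
      have hb := hΔ2 y
      have hfold : |(y:ℝ)|^(-(1+α)) * ((y:ℝ)/N)^2 = |(y:ℝ)|^(1-α) / N^2 := by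
        have hy2 : ((y:ℝ))^2 = |(y:ℝ)|^(2:ℝ) := by
          rw [← sq_abs, ← Real.rpow_natCast |(y:ℝ)| 2]
          norm_num
        have hmul : |(y:ℝ)|^(-(1+α)) * |(y:ℝ)|^(2:ℝ) = |(y:ℝ)|^(1-α) := by
          rw [← Real.rpow_add hyabs]; congr 1; ring
        rw [div_pow, hy2, ← hmul]; ring
      calc c * (|(y:ℝ)|^(-(1+α)) * N^(1+α)) * |discLap α (⇑H) n x y|
          ≤ c * (|(y:ℝ)|^(-(1+α)) * N^(1+α)) * (C2 * ((y:ℝ)/N)^2) := by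
            apply mul_le_mul_of_nonneg_left hb
            positivity
        _ = c * N^(1+α) * (C2 * (|(y:ℝ)|^(-(1+α)) * ((y:ℝ)/N)^2)) := by ring
        _ = c * N^(1+α) * (C2 * |(y:ℝ)|^(1-α) / N^2) := by rw [hfold]; ring
    · rw [if_neg hcase]
      have hb := hΔ4 y
      calc c * (|(y:ℝ)|^(-(1+α)) * N^(1+α)) * |discLap α (⇑H) n x y|
          ≤ c * (|(y:ℝ)|^(-(1+α)) * N^(1+α)) * (4 * C0) := by
            apply mul_le_mul_of_nonneg_left hb
            positivity
        _ = c * N^(1+α) * (4*C0 * |(y:ℝ)|^(-(1+α))) := by ring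
  -- summability of the majorant
  have hJ : Summable (fun y : ℤ => |(y:ℝ)|^(-(1+α))) :=
    Real.summable_abs_int_rpow (by linarith)
  have hMle : ∀ y : ℤ, Mz y ≤ (c * N^(1+α) * (C2 + 4*C0)) * |(y:ℝ)|^(-(1+α)) := by
    intro y
    simp only [hMz]
    by_cases hy : y = 0
    · rw [if_pos hy, hy]
      push_cast
      rw [abs_zero, Real.zero_rpow (show -(1+α) ≠ 0 by intro h; nlinarith), mul_zero]
    · rw [if_neg hy]
      have hyR : ((y:ℝ)) ≠ 0 := by exact_mod_cast hy
      have hyabs : 0 < |(y:ℝ)| := abs_pos.mpr hyR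
      by_cases hcase : |(y:ℝ)| ≤ N
      · rw [if_pos hcase]
        have h1 : |(y:ℝ)|^(1-α) / N^2 ≤ |(y:ℝ)|^(-(1+α)) := by
          have hfold : |(y:ℝ)|^(1-α) = |(y:ℝ)|^(-(1+α)) * |(y:ℝ)|^(2:ℝ) := by
            rw [← Real.rpow_add hyabs]; congr 1; ring
          rw [hfold]
          have h2 : |(y:ℝ)|^(2:ℝ) ≤ N^2 := by
            rw [show ((2:ℝ)) = ((2:ℕ):ℝ) by norm_num, Real.rpow_natCast]
            exact pow_le_pow_left₀ (abs_nonneg _) hcase 2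
          rw [div_le_iff₀ (by positivity)]
          have h3 : (0:ℝ) ≤ |(y:ℝ)|^(-(1+α)) := by positivity
          exact mul_le_mul_of_nonneg_left h2 h3
        have hNp : (0:ℝ) < N^(1+α) := Real.rpow_pos_of_pos hN0 _
        calc c * N^(1+α) * (C2 * |(y:ℝ)|^(1-α) / N^2)
            = (c * N^(1+α) * C2) * (|(y:ℝ)|^(1-α) / N^2) := by ring
          _ ≤ (c * N^(1+α) * C2) * |(y:ℝ)|^(-(1+α)) := by
              apply mul_le_mul_of_nonneg_left h1; positivity
          _ ≤ (c * N^(1+α) * (C2 + 4*C0)) * |(y:ℝ)|^(-(1+α)) := by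
              apply mul_le_mul_of_nonneg_right _ (by positivity)
              have hx : (0:ℝ) ≤ c * N^(1+α) * (4*C0) := by positivity
              linarith
      · rw [if_neg hcase]
        have hNp : (0:ℝ) < N^(1+α) := Real.rpow_pos_of_pos hN0 _
        calc c * N^(1+α) * (4*C0 * |(y:ℝ)|^(-(1+α)))
            = (c * N^(1+α) * (4*C0)) * |(y:ℝ)|^(-(1+α)) := by ring
          _ ≤ (c * N^(1+α) * (C2 + 4*C0)) * |(y:ℝ)|^(-(1+α)) := by
              apply mul_le_mul_of_nonneg_right _ (by positivity)
              have hx : (0:ℝ) ≤ c * N^(1+α) * C2 := by positivity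
              linarith
  have hMsum : Summable Mz := Summable.of_nonneg_of_le hMznn hMle (hJ.mul_left _)
  -- summability of the target family
  have hFsum : Summable (fun y : {y : ℤ // y ≠ 0} =>
      sker α c (((y:ℤ):ℝ)/N) * |discLap α (⇑H) n x y|) :=
    Summable.of_nonneg_of_le hFnn hFle (hMsum.subtype _)
  refine ⟨hFsum, ?_⟩
  -- compare tsum
  have hstep1 : (∑' y : {y : ℤ // y ≠ 0}, sker α c (((y:ℤ):ℝ)/N) * |discLap α (⇑H) n x y|)
      ≤ ∑' y : {y : ℤ // y ≠ 0}, Mz y :=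
    Summable.tsum_le_tsum hFle hFsum (hMsum.subtype _)
  have hstep2 : (∑' y : {y : ℤ // y ≠ 0}, Mz ((y:ℤ))) = ∑' y : ℤ, Mz y := by
    apply tsum_subtype_eq_of_support_subset
    intro y hy
    simp only [Function.mem_support] at hy
    intro h0
    apply hy
    simp only [hMz, if_pos h0]
  -- split ℤ-sum into ℕ-sums
  have hMnat : Summable (fun k : ℕ => Mz k) := hMsum.comp_injective Nat.cast_injective
  have hMneg : Summable (fun k : ℕ => Mz (-(k+1))) := by
    have : Summable (Mz ∘ (fun k : ℕ => (-(k+1) : ℤ))) :=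
      hMsum.comp_injective (fun a b hab => by simpa using hab)
    exact this
  have hstep3 : (∑' y : ℤ, Mz y) = (∑' k : ℕ, Mz k) + ∑' k : ℕ, Mz (-(k+1)) :=
    tsum_of_nat_of_neg_add_one hMnat hMneg
  have heven : ∀ k : ℕ, Mz (-((k:ℤ)+1)) = Mz ((k+1:ℕ)) := by
    intro k
    have h1 : (-((k:ℤ)+1)) ≠ 0 := by omega
    have h2 : ((k+1:ℕ):ℤ) ≠ 0 := by exact_mod_cast Nat.succ_ne_zero k
    simp only [hMz, if_neg h1, if_neg h2]
    have h3 : ((-((k:ℤ)+1) : ℤ) : ℝ) = -((k:ℝ)+1) := by push_cast; ring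
    have h4 : ((((k+1:ℕ)):ℤ):ℝ) = (k:ℝ)+1 := by push_cast; ring
    rw [h3, h4, abs_neg]
  have hnat0 : (∑' k : ℕ, Mz k) = ∑' k : ℕ, Mz ((k+1:ℕ)) := by
    rw [Summable.tsum_eq_zero_add hMnat]
    have h0 : Mz ((0:ℕ):ℤ) = 0 := by
      simp only [hMz, Nat.cast_zero, if_pos rfl]
    rw [h0, zero_add]
  -- identify Mz (k+1) with the model sums
  set A : ℕ → ℝ := fun k => if ((k:ℝ)+1) ≤ N then ((k:ℝ)+1)^(1-α) else 0 with hA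
  set B : ℕ → ℝ := fun k => if N < (k:ℝ)+1 then ((k:ℝ)+1)^(-(1+α)) else 0 with hB
  obtain ⟨hAsum, hAbound⟩ := sumA α N hα0 hα2 hN1
  obtain ⟨hBsum, hBbound⟩ := sumB α N hα0 hα2 hN1
  have hMpos : ∀ k : ℕ, Mz ((k+1:ℕ)) = c * N^(1+α) * ((C2/N^2) * A k + (4*C0) * B k) := by
    intro k
    have h2 : ((k+1:ℕ):ℤ) ≠ 0 := by exact_mod_cast Nat.succ_ne_zero k
    simp only [hMz, hA, hB, if_neg h2]
    have h4 : ((((k+1:ℕ)):ℤ):ℝ) = (k:ℝ)+1 := by push_cast; ring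
    rw [h4, abs_of_pos (by positivity : (0:ℝ) < (k:ℝ)+1)]
    by_cases hcase : ((k:ℝ)+1) ≤ N
    · rw [if_pos hcase, if_pos hcase, if_neg (not_lt.mpr hcase)]
      ring
    · rw [if_neg hcase, if_neg hcase, if_pos (not_le.mp hcase)]
      ring
  have hpossum : (∑' k : ℕ, Mz ((k+1:ℕ)))
      = c * N^(1+α) * ((C2/N^2) * (∑' k, A k) + (4*C0) * (∑' k, B k)) := by
    simp_rw [hMpos]
    rw [tsum_mul_left]
    congr 1
    rw [Summable.tsum_add (hAsum.mul_left _) (hBsum.mul_left _), tsum_mul_left, tsum_mul_left]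
  -- evaluate the N-powers
  have hNe1 : N^(1+α) * N^(-α) = N := by
    rw [← Real.rpow_add hN0, show 1+α+-α = 1 by ring, Real.rpow_one]
  have hNe2 : N^(1+α) * (N^(2-α)/N^2) = N := by
    have hN2 : (N^2 : ℝ) = N^((2:ℕ):ℝ) := by rw [Real.rpow_natCast]
    rw [hN2, ← Real.rpow_sub hN0, ← Real.rpow_add hN0]
    norm_num
  have hbound : (∑' k : ℕ, Mz ((k+1:ℕ))) ≤ c * D * N := by
    rw [hpossum]
    have h1 : (C2/N^2) * (∑' k, A k) + (4*C0) * (∑' k, B k)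
        ≤ (C2/N^2) * ((4/mA) * N^(2-α)) + (4*C0) * ((4/α) * N^(-α)) := by
      apply add_le_add
      · exact mul_le_mul_of_nonneg_left hAbound (by positivity)
      · exact mul_le_mul_of_nonneg_left hBbound (by positivity)
    calc c * N^(1+α) * ((C2/N^2) * (∑' k, A k) + (4*C0) * (∑' k, B k))
        ≤ c * N^(1+α) * ((C2/N^2) * ((4/mA) * N^(2-α)) + (4*C0) * ((4/α) * N^(-α))) := by
          apply mul_le_mul_of_nonneg_left h1
          positivity
      _ = c * ((4*C2/mA) * (N^(1+α) * (N^(2-α)/N^2)) + (16*C0/α) * (N^(1+α) * N^(-α))) := by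
          ring
      _ = c * ((4*C2/mA) * N + (16*C0/α) * N) := by rw [hNe1, hNe2]
      _ = c * D * N := by rw [hD]; ring
  -- final assembly
  have htotal : (∑' y : {y : ℤ // y ≠ 0}, sker α c (((y:ℤ):ℝ)/N) * |discLap α (⇑H) n x y|)
      ≤ 2 * (c * D * N) := by
    calc _ ≤ ∑' y : {y : ℤ // y ≠ 0}, Mz ((y:ℤ)) := hstep1
      _ = ∑' y : ℤ, Mz y := hstep2
      _ = (∑' k : ℕ, Mz k) + ∑' k : ℕ, Mz (-(k+1)) := hstep3
      _ = (∑' k : ℕ, Mz ((k+1:ℕ))) + ∑' k : ℕ, Mz ((k+1:ℕ)) := by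
          rw [hnat0]; congr 1; exact tsum_congr heven
      _ ≤ 2 * (c * D * N) := by linarith [hbound]
  have hpref : (0:ℝ) < 1 / (2*N) := by positivity
  calc (1/(2*N)) * (∑' y : {y : ℤ // y ≠ 0}, sker α c (((y:ℤ):ℝ)/N) * |discLap α (⇑H) n x y|)
      ≤ (1/(2*N)) * (2 * (c * D * N)) := mul_le_mul_of_nonneg_left htotal hpref.le
    _ = c * D := by field_simp
    _ ≤ c * D + 1 := by linarith
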